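/- In the computability predicate for the labeled system: (I) every computable term is terminating; (II) computability is preserved under reduction; (III) if ℓ is a pattern (in a system where all constructor argument types have order 0) and ℓγ is computable, then γ(x) is computable for every variable x in ℓ. -/

import Mathlib

/-! # Applicative term rewriting systems (ATRSs) -/

/-- Simple types over a countable set of sorts. -/
inductive Ty where
  | base : ℕ → Ty
  | arrow : Ty → Ty → Ty

/-- Type order: sorts have order 0, `σ ⇒ τ` has order `max (order σ + 1) (order τ)`. -/
def Ty.order : Ty → ℕ
  | .base _ => 0
  | .arrow σ τ => max (σ.order + 1) τ.order

/-- Applicative terms over a set `α` of function symbols, with variables `ℕ`. -/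
inductive Tm (α : Type) where
  | sym : α → Tm α
  | var : ℕ → Tm α
  | app : Tm α → Tm α → Tm α

mutual
  /-- Strict subterm: `t` is a strict subterm of `s₁ s₂` if it is a strict
  subterm of `s₁` or a subterm of `s₂` (heads of applications are not subterms). -/
  inductive StrSubtm {α : Type} : Tm α → Tm α → Prop where
    | left {t s u : Tm α} : StrSubtm t s → StrSubtm t (Tm.app s u)
    | right {t s u : Tm α} : Subtm t u → StrSubtm t (Tm.app s u)
  /-- Subterm: `t ⊴ s` iff `t = s` or `t` is a strict subterm of `s`. -/
  inductive Subtm {α : Type} : Tm α → Tm α → Prop where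
    | refl (s : Tm α) : Subtm s s
    | strict {t s : Tm α} : StrSubtm t s → Subtm t s
end

/-- A signature: which symbols are constructors, their types, and variable types. -/
structure Sig (α : Type) where
  Cons : α → Prop
  typeOf : α → Ty
  varTy : ℕ → Ty

/-- Typing judgement for applicative terms. -/
inductive HasTy {α : Type} (S : Sig α) : Tm α → Ty → Prop where
  | sym (f : α) : HasTy S (.sym f) (S.typeOf f)
  | var (x : ℕ) : HasTy S (.var x) (S.varTy x)
  | app {s t : Tm α} {σ τ : Ty} :
      HasTy S s (.arrow σ τ) → HasTy S t σ → HasTy S (.app s t) τ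

mutual
  /-- Patterns: a variable, or a constructor fully applied (to base type) to patterns. -/
  inductive Pat {α : Type} (S : Sig α) : Tm α → Prop where
    | var (x : ℕ) : Pat S (.var x)
    | cons {s : Tm α} : PatSpine S s → (∃ i, HasTy S s (.base i)) → Pat S s
  /-- A constructor applied to a (possibly incomplete) list of patterns. -/
  inductive PatSpine {α : Type} (S : Sig α) : Tm α → Prop where
    | head {f : α} : S.Cons f → PatSpine S (.sym f)
    | app {s t : Tm α} : PatSpine S s → Pat S t → PatSpine S (.app s t)
end

/-- Ground terms: terms without variables. -/
def Tm.ground {α : Type} : Tm α → Prop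
  | .sym _ => True
  | .var _ => False
  | .app s t => s.ground ∧ t.ground

/-- Data terms: ground patterns. -/
def IsData {α : Type} (S : Sig α) (s : Tm α) : Prop := Pat S s ∧ s.ground

/-- The set of variables of a term. -/
def Tm.vars {α : Type} : Tm α → Set ℕ
  | .sym _ => ∅
  | .var x => {x}
  | .app s t => s.vars ∪ t.vars

/-- Number of occurrences of variable `x` in a term. -/
def Tm.count {α : Type} (x : ℕ) : Tm α → ℕ
  | .sym _ => 0
  | .var y => if y = x then 1 else 0
  | .app s t => Tm.count x s + Tm.count x t

/-- Applying a substitution to a term. -/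
def subst {α : Type} (γ : ℕ → Tm α) : Tm α → Tm α
  | .sym f => .sym f
  | .var x => γ x
  | .app s t => .app (subst γ s) (subst γ t)

/-- A rewrite rule. -/
structure Rule (α : Type) where
  lhs : Tm α
  rhs : Tm α

/-- Left-hand side shape of a constructor rule:
a defined symbol applied to patterns. -/
inductive LhsSpine {α : Type} (S : Sig α) : Tm α → Prop where
  | head {f : α} : ¬ S.Cons f → LhsSpine S (.sym f)
  | app {s t : Tm α} : LhsSpine S s → Pat S t → LhsSpine S (.app s t)

/-- The head symbol of a term, if any. -/
def Tm.headSym {α : Type} : Tm α → Option α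
  | .sym f => some f
  | .var _ => none
  | .app s _ => s.headSym

/-- `t` has the form `c t₁ ⋯ t_m` with `c` a constructor. -/
def ConsHead {α : Type} (S : Sig α) (t : Tm α) : Prop :=
  ∃ f, t.headSym = some f ∧ S.Cons f

/-- A rule is cons-free if every constructor-headed subterm of the right-hand side
is a data term or a (strict) subterm of the left-hand side. -/
def ConsFreeRule {α : Type} (S : Sig α) (ρ : Rule α) : Prop :=
  ∀ t, Subtm t ρ.rhs → ConsHead S t → (IsData S t ∨ StrSubtm t ρ.lhs)

/-- A left-linear cons-free constructor rule (with well-typed sides of equal type,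
and variables of the right-hand side occurring on the left). -/
def GoodRule {α : Type} (S : Sig α) (ρ : Rule α) : Prop :=
  LhsSpine S ρ.lhs ∧
  (∀ x, Tm.count x ρ.lhs ≤ 1) ∧
  ρ.rhs.vars ⊆ ρ.lhs.vars ∧
  (∃ σ, HasTy S ρ.lhs σ ∧ HasTy S ρ.rhs σ) ∧
  ConsFreeRule S ρ

/-- One-step rewriting: closure of rule instances under application contexts. -/
inductive Rew {α : Type} (R : Set (Rule α)) : Tm α → Tm α → Prop where
  | root {ρ : Rule α} {γ : ℕ → Tm α} :
      ρ ∈ R → Rew R (subst γ ρ.lhs) (subst γ ρ.rhs)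
  | appL {s s' t : Tm α} : Rew R s s' → Rew R (.app s t) (.app s' t)
  | appR {s t t' : Tm α} : Rew R t t' → Rew R (.app s t) (.app s t')

/-- `s` is `B`-safe: every constructor-headed subterm of `s` lies in `B`. -/
def BSafe {α : Type} (S : Sig α) (B : Set (Tm α)) (s : Tm α) : Prop :=
  ∀ t, Subtm t s → ConsHead S t → t ∈ B

/-- `B` is a suitable set of data terms: it consists of data terms, is closed
under subterms, and contains all data subterms of right-hand sides of rules. -/
def GoodB {α : Type} (S : Sig α) (R : Set (Rule α)) (B : Set (Tm α)) : Prop :=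
  (∀ t ∈ B, IsData S t) ∧
  (∀ t ∈ B, ∀ u, Subtm u t → u ∈ B) ∧
  (∀ ρ ∈ R, ∀ t, Subtm t ρ.rhs → IsData S t → t ∈ B)

/-- Spine of a basic term: a defined symbol applied to data terms. -/
inductive BasicSpine {α : Type} (S : Sig α) : Tm α → Prop where
  | head {f : α} : ¬ S.Cons f → BasicSpine S (.sym f)
  | app {s t : Tm α} : BasicSpine S s → IsData S t → BasicSpine S (.app s t)

/-- Basic terms: a defined symbol applied to data terms, of base type. -/
def Basic {α : Type} (S : Sig α) (s : Tm α) : Prop :=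
  BasicSpine S s ∧ ∃ i, HasTy S s (.base i)

/-- The set `B_s`: data terms occurring in `s` or in a right-hand side of a rule. -/
def Bset {α : Type} (S : Sig α) (R : Set (Rule α)) (s : Tm α) : Set (Tm α) :=
  { t | IsData S t ∧ (Subtm t s ∨ ∃ ρ ∈ R, Subtm t ρ.rhs) }
/-! # Labeled systems -/

open Classical in
/-- `labelTm S i s` replaces every defined symbol `f` of `s` by its `i`-labeled
copy `(f, i)`; constructors are unaffected (they get the fixed label `0`). -/
noncomputable def labelTm {α : Type} (S : Sig α) (i : ℕ) : Tm α → Tm (α × ℕ)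
  | .sym f => .sym (f, if S.Cons f then 0 else i)
  | .var x => .var x
  | .app s t => .app (labelTm S i s) (labelTm S i t)

/-- Erasing labels. -/
def eraseTm {α : Type} : Tm (α × ℕ) → Tm α
  | .sym p => .sym p.1
  | .var x => .var x
  | .app s t => .app (eraseTm s) (eraseTm t)

/-- The labeled signature: each labeled copy keeps the status and type of the
original symbol. -/
def SigLab {α : Type} (S : Sig α) : Sig (α × ℕ) :=
  { Cons := fun p => S.Cons p.1
    typeOf := fun p => S.typeOf p.1
    varTy := S.varTy }

/-- The labeled rules: `f_{i+1} → f_i` for every defined symbol `f`, and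
`f_{i+1} ℓ₁ ⋯ ℓ_k → label_i(r)` for every rule `f ℓ₁ ⋯ ℓ_k → r` of `R`. -/
def RLab {α : Type} (S : Sig α) (R : Set (Rule α)) : Set (Rule (α × ℕ)) :=
  { ρ' | ∃ f i, ¬ S.Cons f ∧ ρ' = ⟨.sym (f, i + 1), .sym (f, i)⟩ } ∪
  { ρ' | ∃ ρ ∈ R, ∃ i, ρ' = ⟨labelTm S (i + 1) ρ.lhs, labelTm S i ρ.rhs⟩ }

/-- A symbol applied to a list of arguments. -/
def mkApp {α : Type} (h : Tm α) (l : List (Tm α)) : Tm α := l.foldl Tm.app h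

/-- All argument types of a type are of order 0 (base types). -/
def ConsArgsBase : Ty → Prop
  | .base _ => True
  | .arrow σ τ => σ.order = 0 ∧ ConsArgsBase τ

/-- Termination of a term: no infinite reduction starts from it. -/
def TerminatingTm {α : Type} (R : Set (Rule α)) (s : Tm α) : Prop :=
  ¬ ∃ seq : ℕ → Tm α, seq 0 = s ∧ ∀ n, Rew R (seq n) (seq (n + 1))

/-- The computability predicate, by recursion on types: a base-type term is
computable iff it is terminating; `s : σ ⇒ τ` is computable iff `s t` is
computable for every computable `t : σ`. -/
def Comp {α : Type} (S : Sig α) (R : Set (Rule α)) : Ty → Tm α → Prop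
  | .base _, s => TerminatingTm R s
  | .arrow σ τ, s => ∀ t, HasTy S t σ → Comp S R σ t → Comp S R τ (.app s t)

/-- Existence of a semi-outermost reduction from `s` to `t`. -/
inductive SemiOut {α : Type} (R : Set (Rule α)) : Tm α → Tm α → Prop where
  | refl (s : Tm α) : SemiOut R s s
  | step {f : α} {ss ls : List (Tm α)} {ρ : Rule α} {γ : ℕ → Tm α} {t : Tm α}
      (hρ : ρ ∈ R) (hl : ρ.lhs = mkApp (Tm.sym f) ls)
      (hle : ls.length ≤ ss.length)
      (hargs : ∀ j (hj : j < ls.length),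
        SemiOut R (ss[j]'(lt_of_lt_of_le hj hle)) (subst γ (ls[j]'hj)))
      (hvar : ∀ j (hj : j < ls.length), (∃ x, ls[j]'hj = Tm.var x) →
        ss[j]'(lt_of_lt_of_le hj hle) = subst γ (ls[j]'hj))
      (hrest : SemiOut R (mkApp (subst γ ρ.rhs) (ss.drop ls.length)) t) :
      SemiOut R (mkApp (Tm.sym f) ss) t


namespace CompAux

variable {α β : Type}

/-! ## Basic substitution and rewriting lemmas -/

theorem subst_subst (γ δ : ℕ → Tm β) (t : Tm β) :
    subst δ (subst γ t) = subst (fun x => subst δ (γ x)) t := by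
  induction t with
  | sym f => rfl
  | var x => rfl
  | app a b iha ihb => simp [subst, iha, ihb]

theorem rew_subst {Q : Set (Rule β)} {s t : Tm β} (h : Rew Q s t) (δ : ℕ → Tm β) :
    Rew Q (subst δ s) (subst δ t) := by
  induction h with
  | @root ρ γ hρ =>
    rw [subst_subst, subst_subst]
    exact Rew.root hρ
  | appL _ ih => exact Rew.appL ih
  | appR _ ih => exact Rew.appR ih

theorem rew_cases {Q : Set (Rule β)} {s w : Tm β} (hw : Rew Q s w) :
    (∃ ρ ∈ Q, ∃ γ, s = subst γ ρ.lhs ∧ w = subst γ ρ.rhs) ∨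
    (∃ A B A', s = .app A B ∧ Rew Q A A' ∧ w = .app A' B) ∨
    (∃ A B B', s = .app A B ∧ Rew Q B B' ∧ w = .app A B') := by
  cases hw with
  | @root ρ γ hρ => exact Or.inl ⟨ρ, hρ, γ, rfl, rfl⟩
  | appL h => exact Or.inr (Or.inl ⟨_, _, _, rfl, h, rfl⟩)
  | appR h => exact Or.inr (Or.inr ⟨_, _, _, rfl, h, rfl⟩)

theorem rew_app_inv {Q : Set (Rule β)} {A B w : Tm β} (hw : Rew Q (.app A B) w) :
    (∃ ρ ∈ Q, ∃ γ, Tm.app A B = subst γ ρ.lhs ∧ w = subst γ ρ.rhs) ∨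
    (∃ A', Rew Q A A' ∧ w = .app A' B) ∨ (∃ B', Rew Q B B' ∧ w = .app A B') := by
  rcases rew_cases hw with h | ⟨A₀, B₀, A', he, h1, rfl⟩ | ⟨A₀, B₀, B', he, h1, rfl⟩
  · exact Or.inl h
  · cases he; exact Or.inr (Or.inl ⟨A', h1, rfl⟩)
  · cases he; exact Or.inr (Or.inr ⟨B', h1, rfl⟩)

theorem rew_sym_inv {Q : Set (Rule β)} {c : β} {w : Tm β} (hw : Rew Q (.sym c) w) :
    ∃ ρ ∈ Q, ∃ γ, Tm.sym c = subst γ ρ.lhs ∧ w = subst γ ρ.rhs := by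
  rcases rew_cases hw with h | ⟨A₀, B₀, A', he, _, _⟩ | ⟨A₀, B₀, B', he, _, _⟩
  · exact h
  · cases he
  · cases he

theorem rew_var_inv {Q : Set (Rule β)} {x : ℕ} {w : Tm β} (hw : Rew Q (.var x) w) :
    ∃ ρ ∈ Q, ∃ γ, Tm.var x = subst γ ρ.lhs ∧ w = subst γ ρ.rhs := by
  rcases rew_cases hw with h | ⟨A₀, B₀, A', he, _, _⟩ | ⟨A₀, B₀, B', he, _, _⟩
  · exact h
  · cases he
  · cases he

/-! ## Termination and Acc -/

def SNr (Q : Set (Rule β)) (s : Tm β) : Prop := Acc (fun a b => Rew Q b a) s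

theorem term_of_sn {Q : Set (Rule β)} {s : Tm β} (h : SNr Q s) : TerminatingTm Q s := by
  induction h with
  | intro s h ih =>
    rintro ⟨seq, h0, hstep⟩
    exact ih (seq 1) (by rw [← h0]; exact hstep 0)
      ⟨fun n => seq (n + 1), rfl, fun n => hstep (n + 1)⟩

theorem sn_of_term {Q : Set (Rule β)} {s : Tm β} (h : TerminatingTm Q s) : SNr Q s := by
  by_contra hacc
  have key : ∀ t : Tm β, ¬ SNr Q t → ∃ u, Rew Q t u ∧ ¬ SNr Q u := by
    intro t ht
    by_contra hcon
    push_neg at hcon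
    exact ht (Acc.intro t fun u hu => hcon u hu)
  let g : ℕ → {t : Tm β // ¬ SNr Q t} := fun n =>
    Nat.rec ⟨s, hacc⟩ (fun _ p => ⟨Classical.choose (key p.1 p.2),
      (Classical.choose_spec (key p.1 p.2)).2⟩) n
  exact h ⟨fun n => (g n).1, rfl, fun n => (Classical.choose_spec (key (g n).1 (g n).2)).1⟩

theorem term_step {Q : Set (Rule β)} {s t : Tm β} (h : TerminatingTm Q s)
    (hst : Rew Q s t) : TerminatingTm Q t := by
  rintro ⟨seq, h0, hstep⟩
  refine h ⟨fun n => Nat.casesOn n s seq, rfl, ?_⟩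
  intro n
  cases n with
  | zero => show Rew Q s (seq 0); rw [h0]; exact hst
  | succ m => exact hstep m

theorem term_appL {Q : Set (Rule β)} {u v : Tm β} (h : TerminatingTm Q (.app u v)) :
    TerminatingTm Q u := by
  rintro ⟨seq, h0, hstep⟩
  exact h ⟨fun n => .app (seq n) v, by show Tm.app (seq 0) v = _; rw [h0], fun n => Rew.appL (hstep n)⟩

theorem term_appR {Q : Set (Rule β)} {u v : Tm β} (h : TerminatingTm Q (.app u v)) :
    TerminatingTm Q v := by
  rintro ⟨seq, h0, hstep⟩
  exact h ⟨fun n => .app u (seq n), by show Tm.app u (seq 0) = _; rw [h0], fun n => Rew.appR (hstep n)⟩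

theorem sn_appL {Q : Set (Rule β)} {u v : Tm β} (h : SNr Q (.app u v)) : SNr Q u :=
  sn_of_term (term_appL (term_of_sn h))

theorem term_var_subst {Q : Set (Rule β)} {γ : ℕ → Tm β} {t : Tm β} {x : ℕ}
    (hx : x ∈ t.vars) (h : TerminatingTm Q (subst γ t)) : TerminatingTm Q (γ x) := by
  induction t with
  | sym f => exact absurd hx (Set.notMem_empty x)
  | var y =>
    have hxy : x = y := hx
    subst hxy; exact h
  | app a b iha ihb =>
    rcases hx with hx | hx
    · exact iha hx (term_appL h)
    · exact ihb hx (term_appR h)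

/-! ## Comp basics -/

theorem comp_step {T : Sig β} {Q : Set (Rule β)} : ∀ (σ : Ty) {s t : Tm β},
    Comp T Q σ s → Rew Q s t → Comp T Q σ t
  | .base _, _, _, hc, hst => term_step hc hst
  | .arrow σ τ, _, _, hc, hst => fun u hu hcu =>
      comp_step τ (hc u hu hcu) (Rew.appL hst)

/-! ## Typing basics -/

theorem ty_unique {T : Sig β} {s : Tm β} {σ τ : Ty}
    (h1 : HasTy T s σ) (h2 : HasTy T s τ) : σ = τ := by
  induction h1 generalizing τ with
  | sym f => cases h2; rfl
  | var x => cases h2; rfl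
  | app hf ha ihf iha =>
    cases h2 with
    | app hf' ha' =>
      have h12 := ihf hf'
      cases h12
      rfl

theorem hasTy_subst {T T' : Sig β} (hty : T.typeOf = T'.typeOf)
    {s : Tm β} {σ : Ty} (h : HasTy T s σ) {γ : ℕ → Tm β}
    (hγ : ∀ x ∈ s.vars, HasTy T' (γ x) (T.varTy x)) :
    HasTy T' (subst γ s) σ := by
  induction h with
  | sym f => rw [hty]; exact HasTy.sym f
  | var x => exact hγ x rfl
  | app hf ha ihf iha =>
    exact HasTy.app (ihf fun x hx => hγ x (Or.inl hx)) (iha fun x hx => hγ x (Or.inr hx))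

theorem hasTy_var_inv {T : Sig β} {x : ℕ} {σ : Ty} (h : HasTy T (.var x) σ) :
    σ = T.varTy x := by cases h; rfl

theorem ty_base_of_order_zero : ∀ {σ : Ty}, σ.order = 0 → ∃ i, σ = .base i
  | .base i, _ => ⟨i, rfl⟩
  | .arrow σ τ, h => by simp [Ty.order] at h

/-! ## mkApp lemmas -/

theorem mkApp_cons (h : Tm β) (a : Tm β) (l : List (Tm β)) :
    mkApp h (a :: l) = mkApp (.app h a) l := rfl

theorem mkApp_append (h : Tm β) (l₁ l₂ : List (Tm β)) :
    mkApp h (l₁ ++ l₂) = mkApp (mkApp h l₁) l₂ := by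
  simp [mkApp, List.foldl_append]

theorem mkApp_concat (h : Tm β) (l : List (Tm β)) (t : Tm β) :
    mkApp h (l ++ [t]) = .app (mkApp h l) t := by
  rw [mkApp_append]; rfl

theorem mkApp_eq_sym {h : Tm β} {l : List (Tm β)} {c : β} (e : mkApp h l = .sym c) :
    h = .sym c ∧ l = [] := by
  rcases List.eq_nil_or_concat l with rfl | ⟨l₀, t, rfl⟩
  · exact ⟨e, rfl⟩
  · rw [List.concat_eq_append, mkApp_concat] at e; exact absurd e (by simp)

theorem mkApp_sym_inj : ∀ {l₁ l₂ : List (Tm β)} {a b : β},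
    mkApp (.sym a) l₁ = mkApp (.sym b) l₂ → a = b ∧ l₁ = l₂ := by
  intro l₁
  induction l₁ using List.reverseRecOn with
  | nil =>
    intro l₂ a b e
    obtain ⟨h1, h2⟩ := mkApp_eq_sym e.symm
    cases h1
    exact ⟨rfl, h2.symm⟩
  | append_singleton l₀ t ih =>
    intro l₂ a b e
    rcases List.eq_nil_or_concat l₂ with rfl | ⟨l₂', t', rfl⟩
    · rw [mkApp_concat] at e; exact absurd e (by simp [mkApp])
    · rw [List.concat_eq_append] at e ⊢
      rw [mkApp_concat, mkApp_concat] at e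
      injection e with e1 e2
      obtain ⟨hab, hl⟩ := ih e1
      exact ⟨hab, by rw [hl, e2]⟩

theorem subst_mkApp (γ : ℕ → Tm β) : ∀ (l : List (Tm β)) (h : Tm β),
    subst γ (mkApp h l) = mkApp (subst γ h) (l.map (subst γ)) := by
  intro l
  induction l with
  | nil => intro h; rfl
  | cons a l ih => intro h; rw [mkApp_cons, ih]; rfl

theorem vars_mkApp {g : β} : ∀ {l : List (Tm β)} {x : ℕ},
    x ∈ (mkApp (.sym g) l).vars → ∃ t ∈ l, x ∈ t.vars := by
  intro l
  induction l using List.reverseRecOn with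
  | nil => intro x hx; exact absurd hx (Set.notMem_empty x)
  | append_singleton l₀ t ih =>
    intro x hx
    rw [mkApp_concat] at hx
    rcases hx with hx | hx
    · obtain ⟨u, hu, hxu⟩ := ih hx
      exact ⟨u, by simp [hu], hxu⟩
    · exact ⟨t, by simp, hx⟩

theorem mkApp_ty_head {T : Sig β} : ∀ (ls : List (Tm β)) (h : Tm β) (σ : Ty),
    HasTy T (mkApp h ls) σ → ∃ π, HasTy T h π := by
  intro ls
  induction ls with
  | nil => exact fun h σ hty => ⟨σ, hty⟩
  | cons l ls ih =>
    intro h σ hty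
    obtain ⟨π, hπ⟩ := ih (.app h l) σ hty
    cases hπ with
    | app h1 _ => exact ⟨_, h1⟩

/-! ## Step analysis on spines -/

theorem step_spine {Q : Set (Rule β)} :
    ∀ {ts : List (Tm β)} {h : β} {w : Tm β}, Rew Q (mkApp (.sym h) ts) w →
    (∃ n, n ≤ ts.length ∧ ∃ ρ' ∈ Q, ∃ γ, mkApp (.sym h) (ts.take n) = subst γ ρ'.lhs ∧
        w = mkApp (subst γ ρ'.rhs) (ts.drop n)) ∨
    (∃ j, ∃ hj : j < ts.length, ∃ t', Rew Q (ts[j]'hj) t' ∧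
        w = mkApp (.sym h) (ts.set j t')) := by
  intro ts
  induction ts using List.reverseRecOn with
  | nil =>
    intro h w hw
    obtain ⟨ρ, hρ, γ, he, hw'⟩ := rew_sym_inv hw
    exact Or.inl ⟨0, Nat.zero_le _, ρ, hρ, γ, he, hw'⟩
  | append_singleton ts₀ t ih =>
    intro h w hw
    rw [mkApp_concat] at hw
    rcases rew_app_inv hw with ⟨ρ, hρ, γ, he, hw'⟩ | ⟨A', h1, rfl⟩ | ⟨B', h1, rfl⟩
    · refine Or.inl ⟨(ts₀ ++ [t]).length, le_refl _, ρ, hρ, γ, ?_, ?_⟩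
      · rw [List.take_length, mkApp_concat]; exact he
      · rw [List.drop_length]; exact hw'
    · rcases ih h1 with ⟨n, hn, ρ, hρ, γ, he, hw'⟩ | ⟨j, hj, t', ht', hw'⟩
      · refine Or.inl ⟨n, by simp; omega, ρ, hρ, γ, ?_, ?_⟩
        · rw [List.take_append_of_le_length hn]; exact he
        · rw [List.drop_append_of_le_length hn, mkApp_concat, hw']
      · refine Or.inr ⟨j, by simp; omega, t', ?_, ?_⟩
        · rw [List.getElem_append_left hj]; exact ht'
        · rw [List.set_append_left _ _ hj, mkApp_concat, hw']
    · have hlt : ts₀.length < (ts₀ ++ [t]).length := by simp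
      refine Or.inr ⟨ts₀.length, hlt, B', ?_, ?_⟩
      · rw [List.getElem_concat_length rfl]; exact h1
      · rw [List.set_append_right _ _ (le_refl _)]
        simp [mkApp_concat]

/-! ## Head symbols and head-safe terms -/

theorem headSym_subst {t : Tm β} {p : β} (h : t.headSym = some p) (γ : ℕ → Tm β) :
    (subst γ t).headSym = some p := by
  induction t with
  | sym f => exact h
  | var x => exact absurd h (by simp [Tm.headSym])
  | app a b iha ihb => exact iha h

/-! ## Pattern lemmas -/

theorem spine_consArgsBase {T : Sig β} (hhC : ∀ f, T.Cons f → ConsArgsBase (T.typeOf f)) :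
    ∀ (s : Tm β), PatSpine T s → ∀ τ, HasTy T s τ → ConsArgsBase τ := by
  intro s
  induction s with
  | sym f =>
    intro hs τ hτ
    cases hs with
    | head hc => cases hτ; exact hhC _ hc
  | var x => intro hs; cases hs
  | app a b iha ihb =>
    intro hs τ hτ
    cases hs with
    | app hsa hpb =>
      cases hτ with
      | app hf ha => exact (iha hsa _ hf).2

def VarsBase (T : Sig β) (s : Tm β) : Prop := ∀ x ∈ s.vars, ∃ i, T.varTy x = Ty.base i

theorem pat_varsBase {T : Sig β} (hhC : ∀ f, T.Cons f → ConsArgsBase (T.typeOf f)) :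
    ∀ (s : Tm β), (PatSpine T s → ∀ τ, HasTy T s τ → VarsBase T s) ∧
      (Pat T s → ∀ j, HasTy T s (.base j) → VarsBase T s) := by
  intro s
  induction s with
  | sym f =>
    exact ⟨fun _ _ _ x hx => absurd hx (Set.notMem_empty x),
           fun _ _ _ x hx => absurd hx (Set.notMem_empty x)⟩
  | var y =>
    refine ⟨fun hs => (by cases hs), ?_⟩
    intro _ j hj x hx
    have hxy : x = y := hx
    subst hxy
    exact ⟨j, (hasTy_var_inv hj).symm⟩
  | app a b iha ihb =>
    have part1 : PatSpine T (.app a b) → ∀ τ, HasTy T (.app a b) τ → VarsBase T (.app a b) := by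
      intro hs τ hτ
      cases hs with
      | app hsa hpb =>
        cases hτ with
        | app hf ha =>
          have hCAB := spine_consArgsBase hhC a hsa _ hf
          obtain ⟨i, hbase⟩ := ty_base_of_order_zero hCAB.1
          have vba := iha.1 hsa _ hf
          have vbb := ihb.2 hpb i (hbase ▸ ha)
          intro x hx
          rcases hx with hx | hx
          · exact vba x hx
          · exact vbb x hx
    refine ⟨part1, ?_⟩
    intro hp j hj
    cases hp with
    | cons hsp _ => exact part1 hsp _ hj

/-- (III), generic version: computability of a pattern instance gives
computability of the substitution on its variables. -/
theorem comp_pat_vars {T : Sig β} {Q : Set (Rule β)}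
    (hhC : ∀ f, T.Cons f → ConsArgsBase (T.typeOf f)) {ℓ : Tm β}
    (hp : Pat T ℓ) {σ : Ty} (hty : HasTy T ℓ σ) {γ : ℕ → Tm β}
    (hc : Comp T Q σ (subst γ ℓ)) :
    ∀ x ∈ ℓ.vars, Comp T Q (T.varTy x) (γ x) := by
  cases hp with
  | var y =>
    intro x hx
    have hxy : x = y := hx
    subst hxy
    rw [← hasTy_var_inv hty]
    exact hc
  | cons hsp hb =>
    obtain ⟨i₀, hb₀⟩ := hb
    have hσ : σ = .base i₀ := ty_unique hty hb₀
    subst hσ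
    intro x hx
    obtain ⟨i', hvi⟩ := (pat_varsBase hhC ℓ).2 (Pat.cons hsp ⟨i₀, hb₀⟩) i₀ hb₀ x hx
    rw [hvi]
    exact term_var_subst hx hc

/-! ## Labeling lemmas -/

theorem vars_labelTm (S : Sig α) (i : ℕ) : ∀ (t : Tm α), (labelTm S i t).vars = t.vars := by
  intro t
  induction t with
  | sym f => rfl
  | var x => rfl
  | app a b iha ihb => show (labelTm S i a).vars ∪ (labelTm S i b).vars = _; rw [iha, ihb]; rfl

open Classical in
theorem headSym_labelTm {S : Sig α} {t : Tm α} {f : α} (h : t.headSym = some f) (i : ℕ) :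
    (labelTm S i t).headSym = some (f, if S.Cons f then 0 else i) := by
  induction t with
  | sym g =>
    have : g = f := by simpa [Tm.headSym] using h
    subst this; rfl
  | var x => exact absurd h (by simp [Tm.headSym])
  | app a b iha ihb => exact iha h

theorem labelTm_mkApp (S : Sig α) (i : ℕ) : ∀ (l : List (Tm α)) (h : Tm α),
    labelTm S i (mkApp h l) = mkApp (labelTm S i h) (l.map (labelTm S i)) := by
  intro l
  induction l with
  | nil => intro h; rfl
  | cons a l ih => intro h; rw [mkApp_cons, ih]; rfl

theorem lhsSpine_head {S : Sig α} : ∀ {u : Tm α}, LhsSpine S u →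
    ∃ f, u.headSym = some f ∧ ¬ S.Cons f := by
  intro u h
  induction h with
  | head hf => exact ⟨_, rfl, hf⟩
  | app _ _ ih => exact ih

theorem lhs_shape {S : Sig α} : ∀ {u : Tm α}, LhsSpine S u →
    ∃ f ls, ¬ S.Cons f ∧ u = mkApp (.sym f) ls ∧ ∀ l ∈ ls, Pat S l := by
  intro u h
  induction h with
  | head hf => exact ⟨_, [], hf, rfl, by simp⟩
  | @app s t _ hp ih =>
    obtain ⟨f, ls, hf, rfl, hps⟩ := ih
    refine ⟨f, ls ++ [t], hf, (mkApp_concat _ _ _).symm, ?_⟩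
    intro l hl
    rcases List.mem_append.1 hl with hl | hl
    · exact hps l hl
    · rw [List.mem_singleton.1 hl]; exact hp

/-! ## Head-safe terms for the labeled system -/

def HeadSafe (S : Sig α) (s : Tm (α × ℕ)) : Prop :=
  ∀ p : α × ℕ, s.headSym = some p → S.Cons p.1

variable {S : Sig α} {R : Set (Rule α)}

theorem rlab_lhs_head (hR : ∀ ρ ∈ R, GoodRule S ρ) {ρ' : Rule (α × ℕ)}
    (hρ : ρ' ∈ RLab S R) :
    ∃ f j, ρ'.lhs.headSym = some (f, j + 1) ∧ ¬ S.Cons f := by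
  rcases hρ with ⟨f, i, hf, rfl⟩ | ⟨ρ, hρR, i, rfl⟩
  · exact ⟨f, i, rfl, hf⟩
  · obtain ⟨g, hg, hgc⟩ := lhsSpine_head (hR ρ hρR).1
    refine ⟨g, i, ?_, hgc⟩
    show (labelTm S (i+1) ρ.lhs).headSym = _
    rw [headSym_labelTm hg, if_neg hgc]

theorem headSafe_no_root (hR : ∀ ρ ∈ R, GoodRule S ρ) {s : Tm (α × ℕ)}
    (hs : HeadSafe S s) {ρ' : Rule (α × ℕ)} (hρ : ρ' ∈ RLab S R) (γ : ℕ → Tm (α × ℕ)) :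
    s ≠ subst γ ρ'.lhs := by
  intro e
  obtain ⟨f, j, hh, hfc⟩ := rlab_lhs_head hR hρ
  exact hfc (hs (f, j + 1) (by rw [e, headSym_subst hh]))

theorem headSafe_step (hR : ∀ ρ ∈ R, GoodRule S ρ) {s w : Tm (α × ℕ)}
    (hw : Rew (RLab S R) s w) : HeadSafe S s → HeadSafe S w := by
  induction hw with
  | @root ρ γ hρ => intro hs; exact absurd rfl (headSafe_no_root hR hs hρ γ)
  | @appL u u' v _ ih =>
    intro hs p hp
    exact ih (fun q hq => hs q hq) p hp
  | @appR u v v' _ ih => exact fun hs p hp => hs p hp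

theorem sn_app_headSafe (hR : ∀ ρ ∈ R, GoodRule S ρ) :
    ∀ {u : Tm (α × ℕ)}, SNr (RLab S R) u → HeadSafe S u →
    ∀ {v : Tm (α × ℕ)}, SNr (RLab S R) v → SNr (RLab S R) (.app u v) := by
  intro u hu
  induction hu with
  | intro u _ ihu =>
    intro hsafe v hv
    induction hv with
    | intro v hv' ihv =>
      constructor
      intro w hw
      rcases rew_app_inv hw with ⟨ρ, hρ, γ, he, _⟩ | ⟨u', h1, rfl⟩ | ⟨v', h1, rfl⟩
      · exact absurd he (headSafe_no_root hR
          (show HeadSafe S (Tm.app u v) from fun p hp => hsafe p hp) hρ γ)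
      · exact ihu u' h1 (headSafe_step hR h1 hsafe) (Acc.intro v hv')
      · exact ihv v' h1

theorem sn_sym_cons (hR : ∀ ρ ∈ R, GoodRule S ρ) {c : α} {k : ℕ} (hc : S.Cons c) :
    SNr (RLab S R) (.sym (c, k)) := by
  constructor
  intro w hw
  obtain ⟨ρ, hρ, γ, he, _⟩ := rew_sym_inv hw
  exact absurd he (headSafe_no_root hR (fun p hp => by cases hp; exact hc) hρ γ)

theorem sn_var (hR : ∀ ρ ∈ R, GoodRule S ρ) (x : ℕ) : SNr (RLab S R) (.var x) := by
  constructor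
  intro w hw
  obtain ⟨ρ, hρ, γ, he, _⟩ := rew_var_inv hw
  exact absurd he (headSafe_no_root hR (fun p hp => by simp [Tm.headSym] at hp) hρ γ)

/-! ## A variable-rich signature -/

def tyCode : Ty → ℕ
  | .base i => Nat.pair 0 i
  | .arrow a b => Nat.pair 1 (Nat.pair (tyCode a) (tyCode b))

theorem tyCode_inj : Function.Injective tyCode := by
  intro a
  induction a with
  | base i =>
    intro b h
    cases b with
    | base j => simp [tyCode, Nat.pair_eq_pair] at h; rw [h]
    | arrow b₁ b₂ => simp [tyCode, Nat.pair_eq_pair] at h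
  | arrow a₁ a₂ ih₁ ih₂ =>
    intro b h
    cases b with
    | base j => simp [tyCode, Nat.pair_eq_pair] at h
    | arrow b₁ b₂ =>
      simp [tyCode, Nat.pair_eq_pair] at h
      rw [ih₁ h.1, ih₂ h.2]

instance : Nonempty Ty := ⟨.base 0⟩

noncomputable def tyDec : ℕ → Ty := Function.invFun tyCode

theorem tyDec_code (σ : Ty) : tyDec (tyCode σ) = σ :=
  Function.leftInverse_invFun tyCode_inj σ

/-- The labeled signature with every type inhabited by a variable. -/
noncomputable def SigV (S : Sig α) : Sig (α × ℕ) :=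
  ⟨fun p => S.Cons p.1, fun p => S.typeOf p.1, tyDec⟩

theorem hasTy_varV (S : Sig α) (σ : Ty) : HasTy (SigV S) (.var (tyCode σ)) σ := by
  have h := HasTy.var (S := SigV S) (tyCode σ)
  rwa [show (SigV S).varTy (tyCode σ) = σ from tyDec_code σ] at h

/-! ## CR1 and computability of head-safe terms -/

theorem cr1_vh (hR : ∀ ρ ∈ R, GoodRule S ρ) : ∀ σ : Ty,
    (∀ s, Comp (SigV S) (RLab S R) σ s → SNr (RLab S R) s) ∧
    (∀ s, HeadSafe S s → SNr (RLab S R) s → Comp (SigV S) (RLab S R) σ s) := by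
  intro σ
  induction σ with
  | base i => exact ⟨fun s h => sn_of_term h, fun s _ h => term_of_sn h⟩
  | arrow σ' τ ih' ihτ =>
    constructor
    · intro s hs
      have hcv : Comp (SigV S) (RLab S R) σ' (.var (tyCode σ')) :=
        ih'.2 _ (fun p hp => by simp [Tm.headSym] at hp) (sn_var hR _)
      exact sn_appL (ihτ.1 _ (hs _ (hasTy_varV S σ') hcv))
    · intro s hsafe hsn t ht hct
      exact ihτ.2 _ (fun p hp => hsafe p hp)
        (sn_app_headSafe hR hsn hsafe (ih'.1 t hct))

/-! ## Typing transfer between `S` and `SigV S` -/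

theorem hasTy_lab_subst {r : Tm α} {τ : Ty} (h : HasTy S r τ) (j : ℕ)
    {γ : ℕ → Tm (α × ℕ)} (hγ : ∀ x ∈ r.vars, HasTy (SigV S) (γ x) (S.varTy x)) :
    HasTy (SigV S) (subst γ (labelTm S j r)) τ := by
  induction h with
  | sym f => exact HasTy.sym (S := SigV S) _
  | var x => exact hγ x rfl
  | app hf ha ihf iha =>
    exact HasTy.app (ihf fun x hx => hγ x (Or.inl hx)) (iha fun x hx => hγ x (Or.inr hx))

/-- Spines: a symbol applied to patterns. -/
inductive SpineShape (S : Sig α) : Tm α → Prop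
  | sym (f : α) : SpineShape S (.sym f)
  | app {s t : Tm α} : SpineShape S s → Pat S t → SpineShape S (.app s t)

theorem patSpine_shape : ∀ {s : Tm α}, PatSpine S s → SpineShape S s := by
  intro s
  induction s with
  | sym f => intro _; exact .sym f
  | var x => intro h; cases h
  | app a b iha ihb =>
    intro h
    cases h with
    | app h1 h2 => exact .app (iha h1) h2

theorem lhsSpine_shape : ∀ {s : Tm α}, LhsSpine S s → SpineShape S s := by
  intro s h
  induction h with
  | head _ => exact .sym _
  | app _ hp ih => exact .app ih hp

theorem spine_pat_inv (γ : ℕ → Tm (α × ℕ)) (i : ℕ) :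
    ∀ (a : Tm α),
      (SpineShape S a → ∀ τ τ', HasTy S a τ →
        HasTy (SigV S) (subst γ (labelTm S i a)) τ' →
        τ = τ' ∧ ∀ x ∈ a.vars, HasTy (SigV S) (γ x) (S.varTy x)) ∧
      (Pat S a → ∀ τ, HasTy S a τ → HasTy (SigV S) (subst γ (labelTm S i a)) τ →
        ∀ x ∈ a.vars, HasTy (SigV S) (γ x) (S.varTy x)) := by
  intro a
  induction a with
  | sym f =>
    constructor
    · intro _ τ τ' h1 h2
      cases h1
      cases h2
      exact ⟨rfl, fun x hx => absurd hx (Set.notMem_empty x)⟩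
    · intro _ τ _ _ x hx
      exact absurd hx (Set.notMem_empty x)
  | var y =>
    refine ⟨fun h => (by cases h), ?_⟩
    intro _ τ h1 h2 x hx
    have hxy : x = y := hx
    subst hxy
    rw [hasTy_var_inv h1] at h2
    exact h2
  | app a b iha ihb =>
    have partS : SpineShape S (.app a b) → ∀ τ τ', HasTy S (.app a b) τ →
        HasTy (SigV S) (subst γ (labelTm S i (.app a b))) τ' →
        τ = τ' ∧ ∀ x ∈ (Tm.app a b).vars, HasTy (SigV S) (γ x) (S.varTy x) := by
      intro hsh τ τ' h1 h2
      cases hsh with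
      | app hsa hpb =>
        cases h1 with
        | @app _ _ π _ hfa hab =>
          cases h2 with
          | @app _ _ π'' _ hfa' hab' =>
            obtain ⟨heq, hva⟩ := iha.1 hsa _ _ hfa hfa'
            injection heq with he₁ he₂
            subst he₁
            subst he₂
            have hvb := ihb.2 hpb _ hab hab'
            refine ⟨rfl, ?_⟩
            intro x hx
            rcases hx with hx | hx
            · exact hva x hx
            · exact hvb x hx
    refine ⟨partS, ?_⟩
    intro hp τ h1 h2
    cases hp with
    | cons hsp _ =>
      exact (partS (patSpine_shape hsp) τ τ h1 h2).2

/-! ## Subject reduction for the labeled system under `SigV` -/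

theorem subject_reduction (hR : ∀ ρ ∈ R, GoodRule S ρ) :
    ∀ {a b : Tm (α × ℕ)}, Rew (RLab S R) a b →
      ∀ {σ : Ty}, HasTy (SigV S) a σ → HasTy (SigV S) b σ := by
  intro a b hab
  induction hab with
  | @root ρ' γ hρ' =>
    intro σ hσ
    rcases hρ' with ⟨f, i, hf, rfl⟩ | ⟨ρ, hρR, i, rfl⟩
    · cases hσ
      exact HasTy.sym (S := SigV S) _
    · obtain ⟨hspine, _, hvars, ⟨σρ, hlty, hrty⟩, _⟩ := hR ρ hρR
      obtain ⟨heq, hγ⟩ := (spine_pat_inv γ (i + 1) ρ.lhs).1 (lhsSpine_shape hspine) σρ σ hlty hσ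
      subst heq
      exact hasTy_lab_subst hrty i (fun x hx => hγ x (hvars hx))
  | appL _ ih =>
    intro σ hσ
    cases hσ with
    | app h1 h2 => exact HasTy.app (ih h1) h2
  | appR _ ih =>
    intro σ hσ
    cases hσ with
    | app h1 h2 => exact HasTy.app h1 (ih h2)

/-! ## Vectors of computable arguments -/

inductive ArgsOK {β : Type} (T : Sig β) (Q : Set (Rule β)) : Ty → List (Tm β) → Prop
  | nil (i : ℕ) : ArgsOK T Q (.base i) []
  | cons {σ τ : Ty} {t : Tm β} {ts : List (Tm β)} :
      HasTy T t σ → Comp T Q σ t → ArgsOK T Q τ ts → ArgsOK T Q (.arrow σ τ) (t :: ts)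

theorem comp_of_args {T : Sig β} {Q : Set (Rule β)} : ∀ (τ : Ty) (s : Tm β),
    (∀ ts, ArgsOK T Q τ ts → SNr Q (mkApp s ts)) → Comp T Q τ s := by
  intro τ
  induction τ with
  | base i => intro s h; exact term_of_sn (h [] (.nil i))
  | arrow σ τ ihσ ihτ =>
    intro s h t ht hct
    exact ihτ (.app s t) (fun ts hts => h (t :: ts) (.cons ht hct hts))

theorem args_sn {T : Sig β} {Q : Set (Rule β)} : ∀ {τ : Ty} {ts : List (Tm β)} {W : Tm β},
    ArgsOK T Q τ ts → Comp T Q τ W → SNr Q (mkApp W ts) := by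
  intro τ ts W h
  induction h generalizing W with
  | nil i => intro hc; exact sn_of_term hc
  | cons ht hct _ ih => intro hc; exact ih (hc _ ht hct)

/-! ## Termination of lists of arguments -/

inductive StepL {β : Type} (Q : Set (Rule β)) : List (Tm β) → List (Tm β) → Prop
  | head {t t' : Tm β} {ts : List (Tm β)} : Rew Q t t' → StepL Q (t :: ts) (t' :: ts)
  | tail {t : Tm β} {ts ts' : List (Tm β)} : StepL Q ts ts' → StepL Q (t :: ts) (t :: ts')

def AccL (Q : Set (Rule β)) (ts : List (Tm β)) : Prop := Acc (fun a b => StepL Q b a) ts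

theorem accL_cons {Q : Set (Rule β)} : ∀ {t : Tm β}, SNr Q t →
    ∀ {ts : List (Tm β)}, AccL Q ts → AccL Q (t :: ts) := by
  intro t ht
  induction ht with
  | intro t _ iht =>
    intro ts hts
    induction hts with
    | intro ts hts' ihts =>
      constructor
      intro ys hy
      cases hy with
      | head hstep => exact iht _ hstep (Acc.intro ts hts')
      | tail hstep => exact ihts _ hstep

theorem accL_of {Q : Set (Rule β)} : ∀ {ts : List (Tm β)},
    (∀ t ∈ ts, SNr Q t) → AccL Q ts := by
  intro ts h
  induction ts with
  | nil => exact Acc.intro _ (fun y hy => by cases hy)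
  | cons t ts ih =>
    exact accL_cons (h t (List.mem_cons_self))
      (ih fun u hu => h u (List.mem_cons_of_mem _ hu))

theorem stepL_set {Q : Set (Rule β)} : ∀ {ts : List (Tm β)} {j : ℕ} (hj : j < ts.length)
    {t' : Tm β}, Rew Q (ts[j]'hj) t' → StepL Q ts (ts.set j t') := by
  intro ts
  induction ts with
  | nil => intro j hj; simp at hj
  | cons t ts ih =>
    intro j hj t' hstep
    cases j with
    | zero => exact .head hstep
    | succ m => exact .tail (ih (by simpa using hj) hstep)

theorem argsOK_set (hR : ∀ ρ ∈ R, GoodRule S ρ) :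
    ∀ {τ : Ty} {ts : List (Tm (α × ℕ))}, ArgsOK (SigV S) (RLab S R) τ ts →
    ∀ {j : ℕ} (hj : j < ts.length) {t' : Tm (α × ℕ)}, Rew (RLab S R) (ts[j]'hj) t' →
      ArgsOK (SigV S) (RLab S R) τ (ts.set j t') := by
  intro τ ts h
  induction h with
  | nil i => intro j hj; simp at hj
  | cons ht hct hrest ih =>
    intro j hj t' hstep
    cases j with
    | zero =>
      exact .cons (subject_reduction hR hstep ht) (comp_step _ hct hstep) hrest
    | succ m => exact .cons ht hct (ih (by simpa using hj) hstep)

theorem argsOK_mem_sn (hR : ∀ ρ ∈ R, GoodRule S ρ) :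
    ∀ {τ : Ty} {ts : List (Tm (α × ℕ))}, ArgsOK (SigV S) (RLab S R) τ ts →
      ∀ t ∈ ts, SNr (RLab S R) t := by
  intro τ ts h
  induction h with
  | nil i => intro t ht; simp at ht
  | cons ht hct _ ih =>
    intro u hu
    rcases List.mem_cons.1 hu with rfl | hu
    · exact (cr1_vh hR _).1 _ hct
    · exact ih u hu

/-! ## Pattern argument lemma (III for original patterns) -/

theorem comp_pat_vars' (hC : ∀ f, S.Cons f → ConsArgsBase (S.typeOf f))
    {γ : ℕ → Tm (α × ℕ)} (i : ℕ) :
    ∀ {ℓ : Tm α}, Pat S ℓ → ∀ {σ : Ty}, HasTy S ℓ σ →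
      Comp (SigV S) (RLab S R) σ (subst γ (labelTm S i ℓ)) →
      ∀ x ∈ ℓ.vars, Comp (SigV S) (RLab S R) (S.varTy x) (γ x) := by
  intro ℓ hp σ hty hc x hx
  cases hp with
  | var y =>
    have hxy : x = y := hx
    subst hxy
    rw [← hasTy_var_inv hty]
    exact hc
  | cons hsp hb =>
    obtain ⟨i₀, hb₀⟩ := hb
    have hσ : σ = .base i₀ := ty_unique hty hb₀
    subst hσ
    obtain ⟨i', hvi⟩ := (pat_varsBase hC ℓ).2 (Pat.cons hsp ⟨i₀, hb₀⟩) i₀ hb₀ x hx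
    rw [hvi]
    exact term_var_subst (t := labelTm S i ℓ) (by rw [vars_labelTm]; exact hx) hc

/-! ## Walking down a left-hand side spine -/

theorem walk (hR : ∀ ρ ∈ R, GoodRule S ρ) (hC : ∀ f, S.Cons f → ConsArgsBase (S.typeOf f))
    {γ : ℕ → Tm (α × ℕ)} {i : ℕ} :
    ∀ (ls : List (Tm α)) (h : Tm α) (τ : Ty) (ts : List (Tm (α × ℕ))),
      HasTy S h τ → ArgsOK (SigV S) (RLab S R) τ ts → ls.length ≤ ts.length →
      (∀ l ∈ ls, Pat S l) →
      ts.take ls.length = ls.map (fun l => subst γ (labelTm S i l)) →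
      ∀ σρ, HasTy S (mkApp h ls) σρ →
      ((∀ l ∈ ls, ∀ x ∈ Tm.vars l, Comp (SigV S) (RLab S R) (S.varTy x) (γ x) ∧
          HasTy (SigV S) (γ x) (S.varTy x)) ∧
       (∀ W, Comp (SigV S) (RLab S R) σρ W →
          SNr (RLab S R) (mkApp W (ts.drop ls.length)))) := by
  intro ls
  induction ls with
  | nil =>
    intro h τ ts hh hargs _ _ _ σρ hσρ
    have hστ : σρ = τ := ty_unique hσρ hh
    subst hστ
    exact ⟨by simp, fun W hW => args_sn hargs hW⟩
  | cons l ls' ih =>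
    intro h τ ts hh hargs hlen hpats hmap σρ hσρ
    cases ts with
    | nil => simp at hlen
    | cons t ts' =>
      cases hargs with
      | @cons σ₁ τ₁ _ _ ht hct hargs' =>
        simp only [List.length_cons, List.take_succ_cons, List.map_cons] at hmap
        injection hmap with hmt hmts
        obtain ⟨π, hπ⟩ := mkApp_ty_head ls' (Tm.app h l) σρ hσρ
        cases hπ with
        | @app _ _ ξ _ hh' hl' =>
          have he := ty_unique hh' hh
          injection he with he₁ he₂
          subst he₁
          subst he₂
          have ht' : HasTy (SigV S) (subst γ (labelTm S i l)) ξ := by rw [← hmt]; exact ht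
          have hc' : Comp (SigV S) (RLab S R) ξ (subst γ (labelTm S i l)) := by
            rw [← hmt]; exact hct
          have hvx := comp_pat_vars' hC i (hpats l (List.mem_cons_self)) hl' hc'
          have htx := (spine_pat_inv γ i l).2 (hpats l (List.mem_cons_self)) ξ hl' ht'
          have IH2 := ih (Tm.app h l) π ts' (HasTy.app hh hl') hargs'
            (by simp only [List.length_cons] at hlen; omega)
            (fun u hu => hpats u (List.mem_cons_of_mem _ hu)) hmts σρ hσρ
          refine ⟨?_, ?_⟩
          · intro u hu x hx
            rcases List.mem_cons.1 hu with rfl | hu'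
            · exact ⟨hvx x hx, htx x hx⟩
            · exact IH2.1 u hu' x hx
          · intro W hW
            exact IH2.2 W hW

/-! ## Computability of labeled right-hand side instances -/

theorem rhs_comp (hR : ∀ ρ ∈ R, GoodRule S ρ) {γ : ℕ → Tm (α × ℕ)} {j : ℕ}
    (hdef : ∀ g, ¬ S.Cons g → Comp (SigV S) (RLab S R) (S.typeOf g) (.sym (g, j))) :
    ∀ {r : Tm α} {τ : Ty}, HasTy S r τ →
      (∀ x ∈ r.vars, Comp (SigV S) (RLab S R) (S.varTy x) (γ x) ∧
        HasTy (SigV S) (γ x) (S.varTy x)) →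
      Comp (SigV S) (RLab S R) τ (subst γ (labelTm S j r)) := by
  intro r τ hty
  induction hty with
  | sym f =>
    intro _
    by_cases hf : S.Cons f
    · have he : subst γ (labelTm S j (.sym f)) = Tm.sym (f, 0) := by
        simp [labelTm, subst, hf]
      rw [he]
      exact (cr1_vh hR _).2 _ (fun p hp => by cases hp; exact hf) (sn_sym_cons hR hf)
    · have he : subst γ (labelTm S j (.sym f)) = Tm.sym (f, j) := by
        simp [labelTm, subst, hf]
      rw [he]
      exact hdef f hf
  | var x => intro hγ; exact (hγ x rfl).1
  | @app r₁ r₂ π τ hf ha ihf iha =>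
    intro hγ
    exact (ihf (fun x hx => hγ x (Or.inl hx))) _
      (hasTy_lab_subst ha j (fun x hx => (hγ x (Or.inr hx)).2))
      (iha (fun x hx => hγ x (Or.inr hx)))

/-! ## Termination of labeled defined symbols applied to computable arguments -/

theorem def_sn (hR : ∀ ρ ∈ R, GoodRule S ρ)
    (hC : ∀ f, S.Cons f → ConsArgsBase (S.typeOf f)) :
    ∀ (i : ℕ) (f : α), ¬ S.Cons f →
      ∀ ts, ArgsOK (SigV S) (RLab S R) (S.typeOf f) ts →
        SNr (RLab S R) (mkApp (.sym (f, i)) ts) := by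
  intro i
  induction i using Nat.strong_induction_on with
  | h i IH =>
    intro f hf ts hargs
    have hAcc : AccL (RLab S R) ts := accL_of (argsOK_mem_sn hR hargs)
    revert hargs
    induction hAcc with
    | intro ts _ ihts =>
      intro hargs
      constructor
      intro w hw
      rcases step_spine hw with ⟨n, hn, ρ', hρ', γ, hlhs, hw'⟩ | ⟨j, hj, t', ht', hw'⟩
      · rcases hρ' with ⟨g, m, hg, rfl⟩ | ⟨ρ, hρR, m, rfl⟩
        · -- label collapse rule
          have hlhs' : mkApp (Tm.sym (f, i)) (ts.take n) = Tm.sym (g, m + 1) := hlhs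
          obtain ⟨hhead, htake⟩ := mkApp_eq_sym hlhs'
          injection hhead with hfg
          have hf' : f = g := congrArg Prod.fst hfg
          have hi : i = m + 1 := congrArg Prod.snd hfg
          subst hf'
          have hdrop : ts.drop n = ts := by
            rcases List.take_eq_nil_iff.1 htake with h0 | h0
            · subst h0; rfl
            · subst h0; simp
          rw [hw', hdrop]
          exact IH m (by omega) f hf ts hargs
        · -- labeled copy of an original rule
          obtain ⟨g, ls, hgc, hlshape, hlpats⟩ := lhs_shape (hR ρ hρR).1
          obtain ⟨_, _, hvars, ⟨σρ, hlty, hrty⟩, _⟩ := hR ρ hρR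
          have hlhs' : mkApp (Tm.sym (f, i)) (ts.take n)
              = mkApp (Tm.sym (g, m + 1)) (ls.map (fun l => subst γ (labelTm S (m + 1) l))) := by
            rw [hlhs]
            show subst γ (labelTm S (m + 1) ρ.lhs) = _
            rw [hlshape, labelTm_mkApp, subst_mkApp, List.map_map]
            congr 1
            show subst γ (labelTm S (m + 1) (.sym g)) = _
            simp [labelTm, subst, hgc]
          obtain ⟨hpair, hlists⟩ := mkApp_sym_inj hlhs'
          have hf' : f = g := congrArg Prod.fst hpair
          have hi : i = m + 1 := congrArg Prod.snd hpair
          subst hf'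
          have hlen : ls.length = n := by
            have hll := congrArg List.length hlists
            simp only [List.length_take, List.length_map] at hll
            omega
          have hlen' : ls.length ≤ ts.length := by omega
          have hmap : ts.take ls.length = ls.map (fun l => subst γ (labelTm S (m + 1) l)) := by
            rw [hlen]; exact hlists
          have hσρ : HasTy S (mkApp (.sym f) ls) σρ := hlshape ▸ hlty
          obtain ⟨hγvars, hfinish⟩ := walk hR hC ls (.sym f) (S.typeOf f) ts
            (HasTy.sym f) hargs hlen' hlpats hmap σρ hσρ
          have hdef : ∀ g', ¬ S.Cons g' →
              Comp (SigV S) (RLab S R) (S.typeOf g') (.sym (g', m)) := by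
            intro g' hg'
            exact comp_of_args _ _ (fun ts' hts' => IH m (by omega) g' hg' ts' hts')
          have hγr : ∀ x ∈ ρ.rhs.vars, Comp (SigV S) (RLab S R) (S.varTy x) (γ x) ∧
              HasTy (SigV S) (γ x) (S.varTy x) := by
            intro x hx
            have hxl := hvars hx
            rw [hlshape] at hxl
            obtain ⟨l, hl, hxl'⟩ := vars_mkApp hxl
            exact hγvars l hl x hxl'
          have hcomp := rhs_comp hR hdef hrty hγr
          rw [hw']
          show SNr (RLab S R) (mkApp (subst γ (labelTm S m ρ.rhs)) (ts.drop n))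
          rw [← hlen]
          exact hfinish _ hcomp
      · rw [hw']
        exact ihts _ (stepL_set hj ht') (argsOK_set hR hargs hj ht')

/-! ## Main computability theorem for the rich signature -/

theorem main_comp (hR : ∀ ρ ∈ R, GoodRule S ρ)
    (hC : ∀ f, S.Cons f → ConsArgsBase (S.typeOf f)) :
    ∀ (s : Tm (α × ℕ)) (σ : Ty), HasTy (SigV S) s σ → Comp (SigV S) (RLab S R) σ s := by
  intro s
  induction s with
  | sym p =>
    intro σ hσ
    cases hσ
    obtain ⟨f, k⟩ := p
    by_cases hf : S.Cons f
    · exact (cr1_vh hR _).2 _ (fun q hq => by cases hq; exact hf) (sn_sym_cons hR hf)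
    · exact comp_of_args _ _ (fun ts hts => def_sn hR hC k f hf ts hts)
  | var x =>
    intro σ hσ
    exact (cr1_vh hR σ).2 _ (fun p hp => by simp [Tm.headSym] at hp) (sn_var hR x)
  | app a b iha ihb =>
    intro σ hσ
    cases hσ with
    | app hff ha => exact iha _ hff b ha (ihb _ ha)

end CompAux

open CompAux in
/-- Properties of the computability predicate for the labeled system. -/
theorem computability_properties {α : Type} (S : Sig α) (R : Set (Rule α))
    (hR : ∀ ρ ∈ R, GoodRule S ρ)
    (hC : ∀ f, S.Cons f → ConsArgsBase (S.typeOf f)) :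
    (∀ (σ : Ty) (s : Tm (α × ℕ)), HasTy (SigLab S) s σ →
      Comp (SigLab S) (RLab S R) σ s → TerminatingTm (RLab S R) s) ∧
    (∀ (σ : Ty) (s t : Tm (α × ℕ)), HasTy (SigLab S) s σ →
      Comp (SigLab S) (RLab S R) σ s → Rew (RLab S R) s t →
      Comp (SigLab S) (RLab S R) σ t) ∧
    (∀ (ℓ : Tm (α × ℕ)) (σ : Ty) (γ : ℕ → Tm (α × ℕ)),
      Pat (SigLab S) ℓ → HasTy (SigLab S) ℓ σ →
      (∀ x, HasTy (SigLab S) (γ x) ((SigLab S).varTy x)) →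
      Comp (SigLab S) (RLab S R) σ (subst γ ℓ) →
      ∀ x ∈ Tm.vars ℓ, Comp (SigLab S) (RLab S R) ((SigLab S).varTy x) (γ x)) := by
  refine ⟨?_, ?_, ?_⟩
  · intro σ s hty _
    have hδty : HasTy (SigV S) (subst (fun x => Tm.var (tyCode (S.varTy x))) s) σ :=
      hasTy_subst (T := SigLab S) (T' := SigV S) rfl hty
        (fun x _ => hasTy_varV S (S.varTy x))
    have hsn := term_of_sn ((cr1_vh hR σ).1 _ (main_comp hR hC _ σ hδty))
    rintro ⟨seq, h0, hstep⟩
    refine hsn ⟨fun n => subst (fun x => Tm.var (tyCode (S.varTy x))) (seq n), ?_,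
      fun n => rew_subst (hstep n) _⟩
    show subst _ (seq 0) = _
    rw [h0]
  · intro σ s t _ hc hst
    exact comp_step σ hc hst
  · intro ℓ σ γ hp hty _ hc x hx
    exact comp_pat_vars (T := SigLab S) (Q := RLab S R)
      (fun p hp' => hC p.1 hp') hp hty hc x hx
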